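/- Let (k_i) be a sequence of number fields such that for every x > 0 the prime counting function satisfies π_{k_i}(x) = o([k_i:ℚ]). Then for every real σ > 1 and every s with Re(s) ≥ σ, one has |ζ_{k_i}(s)| = exp(o_σ([k_i:ℚ])), i.e., log|ζ_{k_i}(s)| / [k_i:ℚ] → 0 uniformly in such s. -/

import Mathlib

open NumberField Filter

section Aux

variable (k : Type*) [Field k] [NumberField k]

lemma aux_two_le (𝔭 : {I : Ideal (𝓞 k) // I.IsPrime ∧ I ≠ ⊥}) :
    2 ≤ Ideal.absNorm (𝔭 : Ideal (𝓞 k)) := by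
  have h0 : Ideal.absNorm (𝔭 : Ideal (𝓞 k)) ≠ 0 := by
    rw [Ne, Ideal.absNorm_eq_zero_iff]; exact 𝔭.2.2
  have h1 : Ideal.absNorm (𝔭 : Ideal (𝓞 k)) ≠ 1 := by
    rw [Ne, Ideal.absNorm_eq_one_iff]; exact 𝔭.2.1.ne_top
  omega

lemma aux_card_le (m : ℕ) (v : Finset {I : Ideal (𝓞 k) // I.IsPrime ∧ I ≠ ⊥})
    (hv : ∀ 𝔭 ∈ v, Ideal.absNorm (𝔭 : Ideal (𝓞 k)) = m) :
    v.card ≤ Module.finrank ℚ k := by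
  rcases v.eq_empty_or_nonempty with rfl | ⟨𝔭₀, h𝔭₀⟩
  · simp
  have hm2 : 2 ≤ m := hv 𝔭₀ h𝔭₀ ▸ aux_two_le k 𝔭₀
  have hdvd : ∀ 𝔭 ∈ v, (𝔭 : Ideal (𝓞 k)) ∣ Ideal.span {(m : 𝓞 k)} := by
    intro 𝔭 h
    rw [Ideal.dvd_iff_le, Ideal.span_le, Set.singleton_subset_iff]
    have := Ideal.absNorm_mem (𝔭 : Ideal (𝓞 k))
    rw [hv 𝔭 h] at this
    exact this
  have hcop : (v : Set {I : Ideal (𝓞 k) // I.IsPrime ∧ I ≠ ⊥}).Pairwise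
      (Function.onFun IsCoprime fun 𝔭 : {I : Ideal (𝓞 k) // I.IsPrime ∧ I ≠ ⊥} => (𝔭 : Ideal (𝓞 k))) := by
    intro 𝔭 _ 𝔮 _ hne
    have h1 : (𝔭 : Ideal (𝓞 k)).IsMaximal := 𝔭.2.1.isMaximal 𝔭.2.2
    have h2 : (𝔮 : Ideal (𝓞 k)).IsMaximal := 𝔮.2.1.isMaximal 𝔮.2.2
    rw [Function.onFun, Ideal.isCoprime_iff_sup_eq]
    exact h1.coprime_of_ne h2 (fun h => hne (Subtype.ext h))
  have hprod : (∏ 𝔭 ∈ v, (𝔭 : Ideal (𝓞 k))) ∣ Ideal.span {(m : 𝓞 k)} :=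
    Finset.prod_dvd_of_coprime hcop hdvd
  have hnormprod : Ideal.absNorm (∏ 𝔭 ∈ v, (𝔭 : Ideal (𝓞 k))) = m ^ v.card := by
    rw [map_prod, Finset.prod_congr rfl (fun 𝔭 h => hv 𝔭 h), Finset.prod_const]
  have hnormspan : Ideal.absNorm (Ideal.span {(m : 𝓞 k)}) = m ^ Module.finrank ℚ k := by
    have hcast : ((m : 𝓞 k)) = algebraMap ℤ (𝓞 k) (m : ℤ) := by push_cast; simp
    rw [Ideal.absNorm_span_singleton, hcast,
      Algebra.norm_algebraMap_of_basis (NumberField.RingOfIntegers.basis k),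
      show Fintype.card (Module.Free.ChooseBasisIndex ℤ (𝓞 k)) = Module.finrank ℚ k from
        (Module.finrank_eq_card_chooseBasisIndex ℤ (𝓞 k)).symm.trans
          (NumberField.RingOfIntegers.rank k),
      Int.natAbs_pow]
    simp
  have hdvd2 : m ^ v.card ∣ m ^ Module.finrank ℚ k := by
    rw [← hnormprod, ← hnormspan]
    exact Ideal.absNorm_dvd_absNorm_of_le (Ideal.le_of_dvd hprod)
  have hle : m ^ v.card ≤ m ^ Module.finrank ℚ k :=
    Nat.le_of_dvd (Nat.pow_pos (by omega)) hdvd2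
  exact (Nat.pow_le_pow_iff_right (by omega : 1 < m)).mp hle

lemma aux_sum_le (t : ℝ) (ht : 1 < t) (u : Finset {I : Ideal (𝓞 k) // I.IsPrime ∧ I ≠ ⊥}) :
    ∑ 𝔭 ∈ u, ((Ideal.absNorm (𝔭 : Ideal (𝓞 k)) : ℝ) ^ (-t)) ≤
      (Module.finrank ℚ k : ℝ) * ∑' m : ℕ, (m : ℝ) ^ (-t) := by
  classical
  have hsum : Summable (fun m : ℕ => (m : ℝ) ^ (-t)) := Real.summable_nat_rpow.mpr (by linarith)
  set ν : {I : Ideal (𝓞 k) // I.IsPrime ∧ I ≠ ⊥} → ℕ :=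
    fun 𝔭 => Ideal.absNorm (𝔭 : Ideal (𝓞 k)) with hν
  rw [← Finset.sum_fiberwise_of_maps_to (fun 𝔭 h => Finset.mem_image_of_mem ν h)
    (fun 𝔭 => ((ν 𝔭 : ℝ)) ^ (-t))]
  calc ∑ m ∈ u.image ν, ∑ 𝔭 ∈ u.filter (fun 𝔭 => ν 𝔭 = m), ((ν 𝔭 : ℝ)) ^ (-t)
      ≤ ∑ m ∈ u.image ν, (Module.finrank ℚ k : ℝ) * (m : ℝ) ^ (-t) := by
        refine Finset.sum_le_sum (fun m _ => ?_)
        have hconst : ∑ 𝔭 ∈ u.filter (fun 𝔭 => ν 𝔭 = m), ((ν 𝔭 : ℝ)) ^ (-t)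
            = (u.filter (fun 𝔭 => ν 𝔭 = m)).card * ((m : ℝ)) ^ (-t) := by
          rw [Finset.sum_congr rfl (fun 𝔭 h => by
            rw [(Finset.mem_filter.mp h).2]), Finset.sum_const, nsmul_eq_mul]
        rw [hconst]
        have hcard : ((u.filter (fun 𝔭 => ν 𝔭 = m)).card : ℝ) ≤ (Module.finrank ℚ k : ℝ) := by
          exact_mod_cast aux_card_le k m _ (fun 𝔭 h => (Finset.mem_filter.mp h).2)
        exact mul_le_mul_of_nonneg_right hcard (Real.rpow_nonneg (Nat.cast_nonneg m) _)
    _ = (Module.finrank ℚ k : ℝ) * ∑ m ∈ u.image ν, (m : ℝ) ^ (-t) := by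
        rw [Finset.mul_sum]
    _ ≤ (Module.finrank ℚ k : ℝ) * ∑' m : ℕ, (m : ℝ) ^ (-t) := by
        refine mul_le_mul_of_nonneg_left ?_ (Nat.cast_nonneg _)
        exact Summable.sum_le_tsum _ (fun m _ => Real.rpow_nonneg (Nat.cast_nonneg m) _) hsum

lemma aux_summable (t : ℝ) (ht : 1 < t) :
    Summable (fun 𝔭 : {I : Ideal (𝓞 k) // I.IsPrime ∧ I ≠ ⊥} =>
      (Ideal.absNorm (𝔭 : Ideal (𝓞 k)) : ℝ) ^ (-t)) :=
  summable_of_sum_le (fun 𝔭 => Real.rpow_nonneg (Nat.cast_nonneg _) _) (aux_sum_le k t ht)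

lemma aux_tsum_le (t : ℝ) (ht : 1 < t) :
    ∑' 𝔭 : {I : Ideal (𝓞 k) // I.IsPrime ∧ I ≠ ⊥},
      (Ideal.absNorm (𝔭 : Ideal (𝓞 k)) : ℝ) ^ (-t) ≤
      (Module.finrank ℚ k : ℝ) * ∑' m : ℕ, (m : ℝ) ^ (-t) :=
  Summable.tsum_le_of_sum_le (aux_summable k t ht) (aux_sum_le k t ht)

lemma aux_norm_log {z : ℂ} (hz : ‖z‖ ≤ 1 / 2) : ‖Complex.log (1 - z)‖ ≤ 2 * ‖z‖ := by
  have h1 : ‖-z‖ ≤ 1 / 2 := by rwa [norm_neg]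
  have h2 := Complex.norm_log_one_add_half_le_self h1
  rw [norm_neg] at h2
  calc ‖Complex.log (1 - z)‖ = ‖Complex.log (1 + -z)‖ := by rw [sub_eq_add_neg]
    _ ≤ 3 / 2 * ‖z‖ := h2
    _ ≤ 2 * ‖z‖ := by nlinarith [norm_nonneg z]

end Aux

/-- If the prime counting functions of a sequence of number fields satisfy
`π_{k_i}(x) = o([k_i:ℚ])` for every `x > 0`, then for every `σ > 1`, uniformly in `s` with
`Re s ≥ σ`, `log |ζ_{k_i}(s)| = o_σ([k_i:ℚ])`, where the Dedekind zeta function is given by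
its Euler product. -/
theorem stmt_6 (K : ℕ → Type) [∀ i, Field (K i)] [∀ i, NumberField (K i)]
    (hπ : ∀ x : ℝ, 0 < x →
      Tendsto (fun i =>
        ({𝔭 : Ideal (𝓞 (K i)) | 𝔭.IsPrime ∧ 𝔭 ≠ ⊥ ∧ (Ideal.absNorm 𝔭 : ℝ) ≤ x}.ncard : ℝ)
          / (Module.finrank ℚ (K i) : ℝ)) atTop (nhds 0))
    (σ : ℝ) (hσ : 1 < σ) :
    ∀ ε : ℝ, 0 < ε → ∃ N : ℕ, ∀ i ≥ N, ∀ s : ℂ, σ ≤ s.re →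
      |Real.log ‖
          (∏' 𝔭 : {I : Ideal (𝓞 (K i)) // I.IsPrime ∧ I ≠ ⊥},
            (1 - (Ideal.absNorm (𝔭 : Ideal (𝓞 (K i))) : ℂ) ^ (-s))⁻¹)‖|
        ≤ ε * (Module.finrank ℚ (K i) : ℝ) := by
  intro ε hε
  classical
  set σ' : ℝ := (1 + σ) / 2 with hσ'def
  have hσ'1 : 1 < σ' := by rw [hσ'def]; linarith
  have hσ'σ : σ' < σ := by rw [hσ'def]; linarith
  have hCsum : Summable (fun m : ℕ => (m : ℝ) ^ (-σ')) :=
    Real.summable_nat_rpow.mpr (by linarith)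
  set C : ℝ := ∑' m : ℕ, (m : ℝ) ^ (-σ') with hCdef
  have hC0 : 0 ≤ C := tsum_nonneg (fun m => Real.rpow_nonneg (Nat.cast_nonneg m) _)
  -- choose the cutoff `T`
  obtain ⟨T, hTb, hT1⟩ : ∃ T : ℝ, 2 * C * T ^ (σ' - σ) ≤ ε / 2 ∧ 1 ≤ T := by
    have h0 : Tendsto (fun T : ℝ => 2 * C * T ^ (σ' - σ)) atTop (nhds 0) := by
      have h1 := (tendsto_rpow_neg_atTop (y := σ - σ') (by linarith)).const_mul (2 * C)
      simpa [neg_sub, mul_zero] using h1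
    exact ((h0.eventually_le_const (by positivity)).and (eventually_ge_atTop 1)).exists
  have hT0 : 0 < T := lt_of_lt_of_le zero_lt_one hT1
  -- choose `N` using the hypothesis
  obtain ⟨N, hN⟩ := eventually_atTop.mp
    ((hπ T hT0).eventually_le_const (by positivity : (0:ℝ) < ε / 2))
  refine ⟨N, fun i hi s hs => ?_⟩
  have hsre : 1 < s.re := lt_of_lt_of_le hσ hs
  set n : ℕ := Module.finrank ℚ (K i) with hn
  have hnpos : 0 < n := Module.finrank_pos
  -- notation
  set P := {I : Ideal (𝓞 (K i)) // I.IsPrime ∧ I ≠ ⊥} with hP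
  set f : P → ℂ := fun 𝔭 => (Ideal.absNorm (𝔭 : Ideal (𝓞 (K i))) : ℂ) ^ (-s) with hfdef
  have hN2 : ∀ 𝔭 : P, (2:ℝ) ≤ (Ideal.absNorm (𝔭 : Ideal (𝓞 (K i))) : ℝ) := fun 𝔭 => by
    exact_mod_cast aux_two_le (K i) 𝔭
  have hN1 : ∀ 𝔭 : P, (1:ℝ) ≤ (Ideal.absNorm (𝔭 : Ideal (𝓞 (K i))) : ℝ) := fun 𝔭 =>
    le_trans one_le_two (hN2 𝔭)
  have hnormf : ∀ 𝔭 : P, ‖f 𝔭‖ = (Ideal.absNorm (𝔭 : Ideal (𝓞 (K i))) : ℝ) ^ (-s.re) := by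
    intro 𝔭
    rw [hfdef]
    simp only
    rw [show ((Ideal.absNorm (𝔭 : Ideal (𝓞 (K i))) : ℂ))
        = (((Ideal.absNorm (𝔭 : Ideal (𝓞 (K i))) : ℝ)) : ℂ) by push_cast; rfl]
    rw [Complex.norm_cpow_eq_rpow_re_of_pos (by linarith [hN2 𝔭])]
    simp
  have hfσ' : ∀ 𝔭 : P, ‖f 𝔭‖ ≤ (Ideal.absNorm (𝔭 : Ideal (𝓞 (K i))) : ℝ) ^ (-σ') := by
    intro 𝔭
    rw [hnormf 𝔭]
    exact Real.rpow_le_rpow_of_exponent_le (hN1 𝔭) (by linarith)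
  have hfσ : ∀ 𝔭 : P, ‖f 𝔭‖ ≤ (Ideal.absNorm (𝔭 : Ideal (𝓞 (K i))) : ℝ) ^ (-σ) := by
    intro 𝔭
    rw [hnormf 𝔭]
    exact Real.rpow_le_rpow_of_exponent_le (hN1 𝔭) (by linarith)
  have hfhalf : ∀ 𝔭 : P, ‖f 𝔭‖ ≤ 1 / 2 := by
    intro 𝔭
    refine (hfσ 𝔭).trans ?_
    have h1 : (Ideal.absNorm (𝔭 : Ideal (𝓞 (K i))) : ℝ) ^ (-σ) ≤ (2:ℝ) ^ (-σ) :=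
      Real.rpow_le_rpow_of_nonpos zero_lt_two (hN2 𝔭) (by linarith)
    have h2 : (2:ℝ) ^ (-σ) ≤ (2:ℝ) ^ (-1:ℝ) :=
      Real.rpow_le_rpow_of_exponent_le one_le_two (by linarith)
    have h3 : (2:ℝ) ^ (-1:ℝ) = 1 / 2 := by
      rw [Real.rpow_neg_one]; norm_num
    exact h1.trans (h2.trans h3.le)
  -- summability
  have hsum' : Summable (fun 𝔭 : P => (Ideal.absNorm (𝔭 : Ideal (𝓞 (K i))) : ℝ) ^ (-σ')) :=
    aux_summable (K i) σ' hσ'1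
  have htsum' : ∑' 𝔭 : P, (Ideal.absNorm (𝔭 : Ideal (𝓞 (K i))) : ℝ) ^ (-σ') ≤ (n : ℝ) * C :=
    aux_tsum_le (K i) σ' hσ'1
  have hsumnf : Summable (fun 𝔭 : P => ‖f 𝔭‖) :=
    Summable.of_nonneg_of_le (fun 𝔭 => norm_nonneg _) hfσ' hsum'
  set G : P → ℝ := fun 𝔭 => ‖Complex.log (1 - f 𝔭)‖ with hGdef
  have hG2 : ∀ 𝔭 : P, G 𝔭 ≤ 2 * ‖f 𝔭‖ := fun 𝔭 => aux_norm_log (hfhalf 𝔭)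
  have hGnonneg : ∀ 𝔭 : P, 0 ≤ G 𝔭 := fun 𝔭 => norm_nonneg _
  have hGle : ∀ 𝔭 : P, G 𝔭 ≤ 2 * ((Ideal.absNorm (𝔭 : Ideal (𝓞 (K i))) : ℝ) ^ (-σ')) := by
    intro 𝔭
    have h1 := hG2 𝔭
    have h2 := hfσ' 𝔭
    linarith
  have hGsum : Summable G :=
    Summable.of_nonneg_of_le hGnonneg hGle (hsum'.mul_left 2)
  -- the logarithm identity
  have hne : ∀ 𝔭 : P, 1 - f 𝔭 ≠ 0 := by
    intro 𝔭 h
    rw [sub_eq_zero] at h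
    have h2 := hfhalf 𝔭
    rw [← h] at h2
    norm_num at h2
  have hlogsum : Summable (fun 𝔭 : P => Complex.log (1 - f 𝔭)) :=
    hsumnf.of_norm.clog_one_sub
  set L : ℂ := ∑' 𝔭 : P, -Complex.log (1 - f 𝔭) with hL
  have hHS : HasSum (fun 𝔭 : P => -Complex.log (1 - f 𝔭)) L := hlogsum.neg.hasSum
  have hHP : HasProd (fun 𝔭 : P => (1 - f 𝔭)⁻¹) (Complex.exp L) := by
    have h1 := hHS.cexp
    have heq : (Complex.exp ∘ fun 𝔭 : P => -Complex.log (1 - f 𝔭))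
        = fun 𝔭 : P => (1 - f 𝔭)⁻¹ := funext fun 𝔭 => by
      simp only [Function.comp_apply]
      rw [Complex.exp_neg, Complex.exp_log (hne 𝔭)]
    rwa [heq] at h1
  have hprodeq : (∏' 𝔭 : {I : Ideal (𝓞 (K i)) // I.IsPrime ∧ I ≠ ⊥},
      (1 - (Ideal.absNorm (𝔭 : Ideal (𝓞 (K i))) : ℂ) ^ (-s))⁻¹) = Complex.exp L := hHP.tprod_eq
  rw [hprodeq, Complex.norm_exp, Real.log_exp]
  -- bound |L.re| by the sum of norms
  have habs : |L.re| ≤ ∑' 𝔭 : P, G 𝔭 := by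
    have h1 : |L.re| ≤ ‖L‖ := Complex.abs_re_le_norm L
    have h2 : ‖L‖ ≤ ∑' 𝔭 : P, ‖-Complex.log (1 - f 𝔭)‖ :=
      norm_tsum_le_tsum_norm (by simpa only [norm_neg] using hGsum)
    have h3 : (∑' 𝔭 : P, ‖-Complex.log (1 - f 𝔭)‖) = ∑' 𝔭 : P, G 𝔭 := by
      simp only [norm_neg, hGdef]
    linarith
  -- split into small and large norms
  set A : Set P := {𝔭 : P | (Ideal.absNorm (𝔭 : Ideal (𝓞 (K i))) : ℝ) ≤ T} with hA
  have hsplit : (∑' 𝔭 : A, G 𝔭) + (∑' 𝔭 : ↥Aᶜ, G 𝔭) = ∑' 𝔭 : P, G 𝔭 :=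
    Summable.tsum_subtype_add_tsum_subtype_compl hGsum A
  -- the small part
  set B : Set (Ideal (𝓞 (K i))) :=
    {𝔭 : Ideal (𝓞 (K i)) | 𝔭.IsPrime ∧ 𝔭 ≠ ⊥ ∧ (Ideal.absNorm 𝔭 : ℝ) ≤ T} with hB
  have hBfin : B.Finite := by
    refine (Ideal.finite_setOf_absNorm_le ⌈T⌉₊).subset ?_
    intro I hI
    have h1 : (Ideal.absNorm I : ℝ) ≤ T := hI.2.2
    have h2 : (T : ℝ) ≤ ⌈T⌉₊ := Nat.le_ceil T
    exact_mod_cast h1.trans h2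
  have hAeq : A = Subtype.val ⁻¹' B := by
    ext 𝔭
    simp only [hA, hB, Set.mem_setOf_eq, Set.mem_preimage]
    exact ⟨fun h => ⟨𝔭.2.1, 𝔭.2.2, h⟩, fun h => h.2.2⟩
  have hAfin : A.Finite := hAeq ▸ hBfin.preimage Subtype.val_injective.injOn
  have hBim : Subtype.val '' A = B := by
    ext I
    constructor
    · rintro ⟨𝔭, h𝔭, rfl⟩
      exact ⟨𝔭.2.1, 𝔭.2.2, h𝔭⟩
    · rintro ⟨h1, h2, h3⟩
      exact ⟨⟨I, h1, h2⟩, h3, rfl⟩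
  have hcard : (A.ncard : ℝ) = (B.ncard : ℝ) := by
    rw [← hBim, Set.ncard_image_of_injective A Subtype.val_injective]
  have hsmallcard : (B.ncard : ℝ) ≤ ε / 2 * n := by
    have h1 := hN i hi
    have h2 : (B.ncard : ℝ) / (n : ℝ) ≤ ε / 2 := h1
    have h3 : (0:ℝ) < n := by exact_mod_cast hnpos
    calc (B.ncard : ℝ) = (B.ncard : ℝ) / n * n := by field_simp
      _ ≤ ε / 2 * n := by
          apply mul_le_mul_of_nonneg_right h2 h3.le
  have hG1 : ∀ 𝔭 : P, G 𝔭 ≤ 1 := by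
    intro 𝔭
    have h1 := hG2 𝔭
    have h2 := hfhalf 𝔭
    linarith
  have hsmall : (∑' 𝔭 : A, G 𝔭) ≤ ε / 2 * n := by
    haveI := hAfin.fintype
    rw [tsum_fintype]
    calc ∑ 𝔭 : A, G 𝔭 ≤ Finset.univ.card • (1:ℝ) :=
          Finset.sum_le_card_nsmul _ _ _ (fun 𝔭 _ => hG1 𝔭)
      _ = (Fintype.card A : ℝ) := by
          rw [Finset.card_univ]; simp
      _ = (A.ncard : ℝ) := by
          rw [← Nat.card_coe_set_eq, Nat.card_eq_fintype_card]
      _ = (B.ncard : ℝ) := hcard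
      _ ≤ ε / 2 * n := hsmallcard
  -- the large part
  have hlargept : ∀ 𝔭 : ↥Aᶜ, G 𝔭 ≤ 2 * T ^ (σ' - σ) *
      ((Ideal.absNorm ((𝔭 : P) : Ideal (𝓞 (K i))) : ℝ) ^ (-σ')) := by
    intro ⟨𝔭, h𝔭⟩
    have hTN : T ≤ (Ideal.absNorm (𝔭 : Ideal (𝓞 (K i))) : ℝ) := by
      have := h𝔭
      simp only [hA, Set.mem_compl_iff, Set.mem_setOf_eq, not_le] at this
      exact this.le
    have hNpos : (0:ℝ) < (Ideal.absNorm (𝔭 : Ideal (𝓞 (K i))) : ℝ) := by linarith [hN2 𝔭]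
    have h1 : G 𝔭 ≤ 2 * ((Ideal.absNorm (𝔭 : Ideal (𝓞 (K i))) : ℝ) ^ (-σ)) := by
      have := hG2 𝔭; have := hfσ 𝔭; linarith
    have h2 : (Ideal.absNorm (𝔭 : Ideal (𝓞 (K i))) : ℝ) ^ (-σ)
        = (Ideal.absNorm (𝔭 : Ideal (𝓞 (K i))) : ℝ) ^ (σ' - σ) *
          (Ideal.absNorm (𝔭 : Ideal (𝓞 (K i))) : ℝ) ^ (-σ') := by
      rw [← Real.rpow_add hNpos]; ring_nf
    have h3 : (Ideal.absNorm (𝔭 : Ideal (𝓞 (K i))) : ℝ) ^ (σ' - σ) ≤ T ^ (σ' - σ) :=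
      Real.rpow_le_rpow_of_nonpos hT0 hTN (by linarith)
    have h4 : (0:ℝ) ≤ (Ideal.absNorm (𝔭 : Ideal (𝓞 (K i))) : ℝ) ^ (-σ') :=
      Real.rpow_nonneg hNpos.le _
    calc G 𝔭 ≤ 2 * ((Ideal.absNorm (𝔭 : Ideal (𝓞 (K i))) : ℝ) ^ (-σ)) := h1
      _ = 2 * ((Ideal.absNorm (𝔭 : Ideal (𝓞 (K i))) : ℝ) ^ (σ' - σ) *
          (Ideal.absNorm (𝔭 : Ideal (𝓞 (K i))) : ℝ) ^ (-σ')) := by rw [h2]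
      _ ≤ 2 * (T ^ (σ' - σ) * (Ideal.absNorm (𝔭 : Ideal (𝓞 (K i))) : ℝ) ^ (-σ')) := by
          have := mul_le_mul_of_nonneg_right h3 h4
          linarith
      _ = 2 * T ^ (σ' - σ) * ((Ideal.absNorm (𝔭 : Ideal (𝓞 (K i))) : ℝ) ^ (-σ')) := by ring
  have hlarge : (∑' 𝔭 : ↥Aᶜ, G 𝔭) ≤ ε / 2 * n := by
    have hsub : Summable (fun 𝔭 : ↥Aᶜ =>
        (Ideal.absNorm ((𝔭 : P) : Ideal (𝓞 (K i))) : ℝ) ^ (-σ')) := hsum'.subtype _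
    have h1 : (∑' 𝔭 : ↥Aᶜ, G 𝔭) ≤ ∑' 𝔭 : ↥Aᶜ, 2 * T ^ (σ' - σ) *
        ((Ideal.absNorm ((𝔭 : P) : Ideal (𝓞 (K i))) : ℝ) ^ (-σ')) :=
      Summable.tsum_le_tsum hlargept (hGsum.subtype _) (hsub.mul_left _)
    have h2 : (∑' 𝔭 : ↥Aᶜ, 2 * T ^ (σ' - σ) *
        ((Ideal.absNorm ((𝔭 : P) : Ideal (𝓞 (K i))) : ℝ) ^ (-σ')))
        = 2 * T ^ (σ' - σ) * ∑' 𝔭 : ↥Aᶜ,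
          ((Ideal.absNorm ((𝔭 : P) : Ideal (𝓞 (K i))) : ℝ) ^ (-σ')) := tsum_mul_left
    have h3 : (∑' 𝔭 : ↥Aᶜ, ((Ideal.absNorm ((𝔭 : P) : Ideal (𝓞 (K i))) : ℝ) ^ (-σ')))
        ≤ ∑' 𝔭 : P, (Ideal.absNorm (𝔭 : Ideal (𝓞 (K i))) : ℝ) ^ (-σ') :=
      Summable.tsum_subtype_le _ _ (fun 𝔭 => Real.rpow_nonneg (Nat.cast_nonneg _) _) hsum'
    have hTpow : (0:ℝ) ≤ T ^ (σ' - σ) := Real.rpow_nonneg hT0.le _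
    have h4 : 2 * T ^ (σ' - σ) * (∑' 𝔭 : ↥Aᶜ,
        ((Ideal.absNorm ((𝔭 : P) : Ideal (𝓞 (K i))) : ℝ) ^ (-σ')))
        ≤ 2 * T ^ (σ' - σ) * ((n : ℝ) * C) := by
      apply mul_le_mul_of_nonneg_left (h3.trans htsum') (by positivity)
    have h5 : 2 * T ^ (σ' - σ) * ((n : ℝ) * C) = (2 * C * T ^ (σ' - σ)) * n := by ring
    have h6 : (2 * C * T ^ (σ' - σ)) * (n:ℝ) ≤ ε / 2 * n :=
      mul_le_mul_of_nonneg_right hTb (Nat.cast_nonneg n)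
    linarith
  -- conclude
  have hfinal : (∑' 𝔭 : P, G 𝔭) ≤ ε * n := by
    rw [← hsplit]; linarith
  calc |L.re| ≤ ∑' 𝔭 : P, G 𝔭 := habs
    _ ≤ ε * n := hfinal
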